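/- Fix a density φ, a capacity c ∈ (0,1), and the independent decision rule U_n(s) = (1−(1−s)^n)/n. For each N, let f_N be a Nash equilibrium of the N-firm instance with thresholds τ given by the Nash equilibrium characterization, and write M = Mmax(f_N). Then τ_{M−1} ≤ 1 − M^{−1/(M−1)}, and consequently lim_{N → ∞} τ_{Mmax(f_N)−1} = 0. -/

import Mathlib

open MeasureTheory Set Filter Topology

noncomputable section

/-- The measure of a set `A` under the score density `φ`. -/
def dMeas (φ : ℝ → ℝ) (A : Set ℝ) : ℝ := ∫ s in A, φ s

/-- `K` is a finite union of closed intervals. -/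
def FinUnionIntervals (K : Set ℝ) : Prop :=
  ∃ (n : ℕ) (a b : Fin n → ℝ), K = ⋃ i, Set.Icc (a i) (b i)

/-- A feasible strategy: a finite union of closed intervals inside `[0,1]`
with `φ`-measure at most the capacity `c`. -/
def Feasible (φ : ℝ → ℝ) (c : ℝ) (K : Set ℝ) : Prop :=
  K ⊆ Set.Icc (0:ℝ) 1 ∧ FinUnionIntervals K ∧ dMeas φ K ≤ c

/-- `M(s;K)`: the number of firms interviewing an applicant with score `s`. -/
def numFirms {N : ℕ} (K : Fin N → Set ℝ) (s : ℝ) : ℕ :=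
  Nat.card {i : Fin N // s ∈ K i}

/-- `Mmax(K)`: the maximal congestion over scores in `[0,1]`. -/
def maxFirms {N : ℕ} (K : Fin N → Set ℝ) : ℕ :=
  sSup ((fun s => numFirms K s) '' Set.Icc (0:ℝ) 1)

/-- Firm `i`'s expected utility under the profile `K`. -/
def utility (φ : ℝ → ℝ) (U : ℕ → ℝ → ℝ) {N : ℕ} (K : Fin N → Set ℝ) (i : Fin N) : ℝ :=
  ∫ s in K i, U (numFirms K s) s * φ s

/-- Social welfare: the total utility of all firms. -/
def SW (φ : ℝ → ℝ) (U : ℕ → ℝ → ℝ) {N : ℕ} (K : Fin N → Set ℝ) : ℝ :=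
  ∑ i, utility φ U K i

/-- Nash equilibrium: every strategy is feasible and no firm can strictly
increase its utility by a unilateral feasible deviation. -/
def NashEq (φ : ℝ → ℝ) (c : ℝ) (U : ℕ → ℝ → ℝ) {N : ℕ} (K : Fin N → Set ℝ) : Prop :=
  (∀ i, Feasible φ c (K i)) ∧
  ∀ (i : Fin N) (K' : Set ℝ), Feasible φ c K' →
    utility φ U (Function.update K i K') i ≤ utility φ U K i

/-- Correlated decision rule: `U_n(s) = s / n`. -/
def Ucorr : ℕ → ℝ → ℝ := fun n s => s / n

/-- Independent decision rule: `U_n(s) = (1 - (1-s)^n) / n`. -/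
def Uindep : ℕ → ℝ → ℝ := fun n s => (1 - (1 - s) ^ n) / n

/-- The threshold structure associated with a Nash equilibrium:
`τ 0 = 0`, `τ (N+1) = 1`, the thresholds are nondecreasing, every firm uses its
full capacity, exactly `m` firms interview scores in `[τ m, τ (m+1))`, and the
utilities at the thresholds are nondecreasing. -/
def IsThresholds (φ : ℝ → ℝ) (c : ℝ) (U : ℕ → ℝ → ℝ) {N : ℕ}
    (K : Fin N → Set ℝ) (τ : ℕ → ℝ) : Prop :=
  τ 0 = 0 ∧ τ (N + 1) = 1 ∧ (∀ k, k ≤ N → τ k ≤ τ (k + 1)) ∧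
  (∀ i, dMeas φ (K i) = c) ∧
  (∀ m, m ≤ maxFirms K → ∀ s ∈ Set.Ico (τ m) (τ (m + 1)), numFirms K s = m) ∧
  (∀ n m, 1 ≤ n → n < m → m ≤ maxFirms K → U n (τ n) ≤ U m (τ m))

lemma numFirms_le_aux {N : ℕ} (K : Fin N → Set ℝ) (s : ℝ) : numFirms K s ≤ N := by
  classical
  simp only [numFirms, Nat.card_eq_fintype_card]
  simpa using Fintype.card_subtype_le (fun i : Fin N => s ∈ K i)

lemma maxFirms_le_aux {N : ℕ} (K : Fin N → Set ℝ) : maxFirms K ≤ N := by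
  have hne : ((fun s => numFirms K s) '' Set.Icc (0:ℝ) 1).Nonempty :=
    ⟨numFirms K 0, 0, by norm_num, rfl⟩
  refine csSup_le hne ?_
  rintro x ⟨s, -, rfl⟩
  exact numFirms_le_aux K s

lemma le_maxFirms_aux {N : ℕ} (K : Fin N → Set ℝ) {s : ℝ} (hs : s ∈ Set.Icc (0:ℝ) 1) :
    numFirms K s ≤ maxFirms K := by
  have hbdd : BddAbove ((fun s => numFirms K s) '' Set.Icc (0:ℝ) 1) := by
    refine ⟨N, ?_⟩
    rintro x ⟨s', -, rfl⟩
    exact numFirms_le_aux K s'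
  exact le_csSup hbdd ⟨s, hs, rfl⟩

lemma tau_chain {N : ℕ} {τ : ℕ → ℝ} (hmono : ∀ k, k ≤ N → τ k ≤ τ (k + 1)) :
    ∀ a b, a ≤ b → b ≤ N + 1 → τ a ≤ τ b := by
  intro a b hab hb
  induction b with
  | zero =>
    obtain rfl : a = 0 := Nat.le_zero.mp hab
    exact le_rfl
  | succ b ih =>
    rcases Nat.lt_or_ge a (b + 1) with h | h
    · exact le_trans (ih (by omega) (by omega)) (hmono b (by omega))
    · obtain rfl : a = b + 1 := by omega
      exact le_rfl

/-- Part 1 content: the bound on the second-highest threshold. -/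
lemma tau_bound_aux (φ : ℝ → ℝ) (c : ℝ) {N : ℕ} (K : Fin N → Set ℝ) (τ : ℕ → ℝ)
    (hThr : IsThresholds φ c Uindep K τ) :
    τ (maxFirms K - 1) ≤
      1 - (maxFirms K : ℝ) ^ (-(1 : ℝ) / ((maxFirms K : ℝ) - 1)) := by
  obtain ⟨h0, h1, hmono, -, -, hU⟩ := hThr
  set M := maxFirms K with hMdef
  have hMN : M ≤ N := maxFirms_le_aux K
  rcases Nat.lt_or_ge M 2 with hM2 | hM2
  · -- M = 0 or M = 1
    have hM01 : M = 0 ∨ M = 1 := by omega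
    rcases hM01 with h | h <;> rw [h] <;> simp [h0] <;> norm_num
  · -- main case M ≥ 2
    have hchain := tau_chain hmono
    have hMpos : (0:ℝ) < (M : ℝ) := by exact_mod_cast Nat.lt_of_lt_of_le Nat.zero_lt_two hM2
    set m : ℕ := M - 1 with hmdef
    have hm : (m : ℝ) = (M : ℝ) - 1 := by
      rw [hmdef, Nat.cast_sub (by omega)]
      norm_num
    have hM2' : (2:ℝ) ≤ (M : ℝ) := by exact_mod_cast hM2
    have hmpos : (0:ℝ) < (m : ℝ) := by
      rw [hm]; linarith
    have hτM1 : τ M ≤ 1 := by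
      have := hchain M (N + 1) (by omega) le_rfl
      rw [h1] at this; exact this
    have ht1 : τ m ≤ 1 := le_trans (hchain m M (by omega) (by omega)) hτM1
    set t := τ m with htdef
    set x := 1 - t with hxdef
    have hx0 : (0:ℝ) ≤ x := by rw [hxdef]; linarith
    -- threshold utility comparison
    have hUcomp : Uindep m t ≤ Uindep M (τ M) := hU m M (by omega) (by omega) le_rfl
    have hUM : Uindep M (τ M) ≤ 1 / (M : ℝ) := by
      have hz : (0:ℝ) ≤ (1 - τ M) ^ M := by
        apply pow_nonneg; linarith
      simp only [Uindep]
      gcongr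
      linarith
    have hstep : (1 - x ^ m) / (m : ℝ) ≤ 1 / (M : ℝ) := by
      have : Uindep m t = (1 - x ^ m) / (m : ℝ) := by simp [Uindep, hxdef]
      rw [← this]; exact hUcomp.trans hUM
    have hxm : (1:ℝ) / (M : ℝ) ≤ x ^ m := by
      rw [div_le_div_iff₀ hmpos hMpos] at hstep
      rw [div_le_iff₀ hMpos]
      nlinarith [hstep, hm]
    -- take (m)-th roots via rpow
    have hmne : ((m : ℝ)) ≠ 0 := ne_of_gt hmpos
    have hx1 : ((x ^ (m : ℕ) : ℝ)) ^ ((m : ℝ)⁻¹) = x := by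
      rw [← Real.rpow_natCast x m, ← Real.rpow_mul hx0, mul_inv_cancel₀ hmne,
        Real.rpow_one]
    have hmono_r : ((1:ℝ) / (M : ℝ)) ^ ((m : ℝ)⁻¹) ≤ ((x ^ (m : ℕ) : ℝ)) ^ ((m : ℝ)⁻¹) :=
      Real.rpow_le_rpow (by positivity) hxm (by positivity)
    have hlhs : ((1:ℝ) / (M : ℝ)) ^ ((m : ℝ)⁻¹)
        = (M : ℝ) ^ (-(1 : ℝ) / ((M : ℝ) - 1)) := by
      have hexp : (-1 : ℝ) * ((m : ℝ))⁻¹ = -(1 : ℝ) / ((M : ℝ) - 1) := by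
        rw [hm]; ring
      rw [one_div, ← Real.rpow_neg_one (M : ℝ), ← Real.rpow_mul hMpos.le, hexp]
    rw [hx1, hlhs] at hmono_r
    linarith [hmono_r]

/-- Total capacity is at most the maximal congestion. -/
lemma capacity_le_aux (φ : ℝ → ℝ)
    (hφpos : ∀ s ∈ Set.Icc (0:ℝ) 1, 0 < φ s)
    (hφint : ∫ s in Set.Icc (0:ℝ) 1, φ s = 1)
    (c : ℝ) {N : ℕ} (K : Fin N → Set ℝ)
    (hfeas : ∀ i, Feasible φ c (K i)) (hcap : ∀ i, dMeas φ (K i) = c) :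
    (N : ℝ) * c ≤ (maxFirms K : ℝ) := by
  classical
  have hint : IntegrableOn φ (Set.Icc (0:ℝ) 1) := by
    by_contra h
    rw [MeasureTheory.integral_undef h] at hφint
    norm_num at hφint
  have hKm : ∀ i, MeasurableSet (K i) := by
    intro i
    obtain ⟨-, ⟨n, a, b, hK⟩, -⟩ := hfeas i
    rw [hK]
    exact MeasurableSet.iUnion fun j => measurableSet_Icc
  have hKs : ∀ i, K i ⊆ Set.Icc (0:ℝ) 1 := fun i => (hfeas i).1
  have hind : ∀ i, IntegrableOn ((K i).indicator φ) (Set.Icc (0:ℝ) 1) :=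
    fun i => hint.indicator (hKm i)
  have hsum_eq : ∀ s, ∑ i, (K i).indicator φ s = (numFirms K s : ℝ) * φ s := by
    intro s
    rw [numFirms, Nat.card_eq_fintype_card, Fintype.card_subtype]
    simp only [Set.indicator_apply]
    rw [Finset.sum_ite, Finset.sum_const, Finset.sum_const_zero, add_zero, nsmul_eq_mul]
  have hintsum : IntegrableOn (fun s => (numFirms K s : ℝ) * φ s) (Set.Icc (0:ℝ) 1) := by
    have h1 : IntegrableOn (fun s => ∑ i, (K i).indicator φ s) (Set.Icc (0:ℝ) 1) :=
      MeasureTheory.integrable_finset_sum _ (fun i _ => hind i)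
    exact h1.congr (Filter.Eventually.of_forall hsum_eq)
  have h1 : (N : ℝ) * c = ∫ s in Set.Icc (0:ℝ) 1, (numFirms K s : ℝ) * φ s := by
    have hci : ∀ i : Fin N, c = ∫ s in Set.Icc (0:ℝ) 1, (K i).indicator φ s := by
      intro i
      rw [MeasureTheory.setIntegral_indicator (hKm i),
        Set.inter_eq_self_of_subset_right (hKs i)]
      exact (hcap i).symm
    calc (N : ℝ) * c = ∑ _i : Fin N, c := by
          rw [Finset.sum_const, Finset.card_univ, Fintype.card_fin, nsmul_eq_mul]
      _ = ∑ i : Fin N, ∫ s in Set.Icc (0:ℝ) 1, (K i).indicator φ s :=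
          Finset.sum_congr rfl (fun i _ => hci i)
      _ = ∫ s in Set.Icc (0:ℝ) 1, ∑ i, (K i).indicator φ s :=
          (MeasureTheory.integral_finset_sum _ (fun i _ => hind i)).symm
      _ = ∫ s in Set.Icc (0:ℝ) 1, (numFirms K s : ℝ) * φ s :=
          MeasureTheory.integral_congr_ae (Filter.Eventually.of_forall hsum_eq)
  have h2 : ∫ s in Set.Icc (0:ℝ) 1, (numFirms K s : ℝ) * φ s
      ≤ ∫ s in Set.Icc (0:ℝ) 1, (maxFirms K : ℝ) * φ s := by
    apply MeasureTheory.setIntegral_mono_on hintsum (hint.const_mul _) measurableSet_Icc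
    intro s hs
    apply mul_le_mul_of_nonneg_right _ (hφpos s hs).le
    exact_mod_cast le_maxFirms_aux K hs
  have h3 : ∫ s in Set.Icc (0:ℝ) 1, (maxFirms K : ℝ) * φ s = (maxFirms K : ℝ) := by
    rw [MeasureTheory.integral_const_mul, hφint, mul_one]
  linarith

/-- The bound function tends to zero. -/
lemma bound_tendsto_aux :
    Tendsto (fun m : ℕ => 1 - (m : ℝ) ^ (-(1 : ℝ) / ((m : ℝ) - 1))) atTop (𝓝 0) := by
  have hlog : Tendsto (fun x : ℝ => Real.log x / (x - 1)) atTop (𝓝 0) := by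
    have h := Real.tendsto_pow_log_div_mul_add_atTop 1 (-1) 1 one_ne_zero
    simp only [pow_one, one_mul] at h
    refine h.congr (fun x => ?_)
    ring_nf
  have hlogn : Tendsto (fun m : ℕ => Real.log m / ((m : ℝ) - 1)) atTop (𝓝 0) :=
    hlog.comp tendsto_natCast_atTop_atTop
  have hexp : Tendsto (fun m : ℕ => Real.exp (-(Real.log m / ((m : ℝ) - 1)))) atTop (𝓝 1) := by
    have h := hlogn.neg
    rw [neg_zero] at h
    have h2 := (Real.continuous_exp.tendsto 0).comp h
    simpa [Function.comp_def, Real.exp_zero] using h2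
  have hmain : Tendsto (fun m : ℕ => 1 - Real.exp (-(Real.log m / ((m : ℝ) - 1))))
      atTop (𝓝 0) := by
    have h := (tendsto_const_nhds (x := (1:ℝ)) (f := atTop)).sub hexp
    simpa using h
  apply hmain.congr'
  filter_upwards [eventually_ge_atTop 2] with n hn
  have hn0 : (0:ℝ) < (n : ℝ) := by exact_mod_cast Nat.lt_of_lt_of_le Nat.zero_lt_two hn
  rw [Real.rpow_def_of_pos hn0]
  have : Real.log n * (-(1 : ℝ) / ((n : ℝ) - 1)) = -(Real.log n / ((n : ℝ) - 1)) := by ring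
  rw [this]

/-- **Lemma (the second-highest threshold vanishes, independent rule).**
For a Nash equilibrium of the `N`-firm instance with the independent rule and
thresholds `τ`, writing `M = Mmax`, one has `τ_{M-1} ≤ 1 - M^{-1/(M-1)}`;
consequently, along any sequence of Nash equilibria, `τ_{Mmax(f_N)-1} → 0`. -/
theorem tau_second_highest_vanishes
    (φ : ℝ → ℝ)
    (hφm : Measurable φ) (hφpos : ∀ s ∈ Set.Icc (0:ℝ) 1, 0 < φ s)
    (hφint : ∫ s in Set.Icc (0:ℝ) 1, φ s = 1)
    (c : ℝ) (hc : 0 < c) (hc1 : c < 1) :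
    (∀ (N : ℕ) (K : Fin N → Set ℝ) (τ : ℕ → ℝ), 2 ≤ N →
      NashEq φ c Uindep K → IsThresholds φ c Uindep K τ →
      τ (maxFirms K - 1) ≤
        1 - (maxFirms K : ℝ) ^ (-(1 : ℝ) / ((maxFirms K : ℝ) - 1))) ∧
    (∀ (f : (N : ℕ) → Fin N → Set ℝ) (τ : (N : ℕ) → ℕ → ℝ),
      (∀ N, 2 ≤ N → NashEq φ c Uindep (f N) ∧ IsThresholds φ c Uindep (f N) (τ N)) →
      Tendsto (fun N => τ N (maxFirms (f N) - 1)) atTop (𝓝 0)) := by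
  constructor
  · intro N K τ hN hNash hThr
    exact tau_bound_aux φ c K τ hThr
  · intro f τ hyp
    -- the maximal congestion tends to infinity
    have hMlb : ∀ N : ℕ, 2 ≤ N → (N : ℝ) * c ≤ (maxFirms (f N) : ℝ) := by
      intro N hN
      obtain ⟨hNash, hThr⟩ := hyp N hN
      exact capacity_le_aux φ hφpos hφint c (f N) hNash.1 hThr.2.2.2.1
    have hMtop : Tendsto (fun N => maxFirms (f N)) atTop atTop := by
      rw [tendsto_atTop]
      intro b
      filter_upwards [eventually_ge_atTop (max 2 ⌈(b : ℝ) / c⌉₊)] with N hN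
      have h2 : 2 ≤ N := le_trans (le_max_left _ _) hN
      have hlb := hMlb N h2
      have hceil : ((b : ℝ) / c) ≤ (N : ℝ) := by
        calc ((b : ℝ) / c) ≤ (⌈(b : ℝ) / c⌉₊ : ℝ) := Nat.le_ceil _
          _ ≤ (N : ℝ) := by exact_mod_cast le_trans (le_max_right 2 _) hN
      have hb : (b : ℝ) ≤ (N : ℝ) * c := by
        rw [div_le_iff₀ hc] at hceil
        linarith
      exact_mod_cast hb.trans hlb
    refine tendsto_of_tendsto_of_tendsto_of_le_of_le' tendsto_const_nhds
      (bound_tendsto_aux.comp hMtop) ?_ ?_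
    · filter_upwards [eventually_ge_atTop 2] with N hN
      obtain ⟨hNash, hThr⟩ := hyp N hN
      obtain ⟨h0, h1, hmono, -⟩ := hThr
      have := tau_chain hmono 0 (maxFirms (f N) - 1) (Nat.zero_le _)
        (by have := maxFirms_le_aux (f N); omega)
      rw [h0] at this
      exact this
    · filter_upwards [eventually_ge_atTop 2] with N hN
      exact tau_bound_aux φ c (f N) (τ N) (hyp N hN).2
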